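/- Let R^{(1)}, R^{(2)}, … be i.i.d. increasing random walks on ℕ with step distribution (p_i)_{i≥1}, p_1 < 1, and finite mean μ ∈ (1,∞). Then for each n, the sequence (R^{(n)} ∘ ⋯ ∘ R^{(1)}(j))_{j≥0} is again an increasing random walk on ℕ (i.e., has i.i.d. increments), with generic increment distributed as the generation-n size Z_n of a Galton–Watson process with offspring distribution (p_i) and one ancestor. -/

import Mathlib

set_option maxHeartbeats 1000000

open MeasureTheory ProbabilityTheory
set_option maxHeartbeats 1000000


namespace Stmt6Aux

/-- top sigma algebra on ℕ generated by singletons -/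
lemma nat_generateFrom_singletons :
    (inferInstance : MeasurableSpace ℕ) =
      MeasurableSpace.generateFrom (Set.range (fun a : ℕ => ({a} : Set ℕ))) := by
  refine le_antisymm (fun s _ => ?_) (MeasurableSpace.generateFrom_le fun t _ => trivial)
  have : s = ⋃ a ∈ s, ({a} : Set ℕ) := by ext x; simp
  rw [this]
  exact .biUnion s.to_countable fun a _ =>
    MeasurableSpace.measurableSet_generateFrom ⟨a, rfl⟩

/-- composition helper -/
lemma measurable_nat_elim {Ω : Type*} {m : MeasurableSpace Ω} {g : Ω → ℕ} {F : ℕ → Ω → ℕ}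
    (hg : Measurable[m] g) (hF : ∀ k, Measurable[m] (F k)) :
    Measurable[m] (fun ω => F (g ω) ω) := by
  refine measurable_to_countable' fun a => ?_
  have : (fun ω => F (g ω) ω) ⁻¹' {a} = ⋃ k, g ⁻¹' {k} ∩ F k ⁻¹' {a} := by
    ext ω; simp
  rw [this]
  exact .iUnion fun k => (hg (measurableSet_singleton k)).inter (hF k (measurableSet_singleton a))

lemma measurable_nat_sub {Ω : Type*} {m : MeasurableSpace Ω} {f g : Ω → ℕ}
    (hf : Measurable[m] f) (hg : Measurable[m] g) :
    Measurable[m] (fun ω => f ω - g ω) := by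
  refine measurable_to_countable' fun a => ?_
  have : (fun ω => f ω - g ω) ⁻¹' {a} = ⋃ v, f ⁻¹' {v} ∩ g ⁻¹' {c | v - c = a} := by
    ext ω; simp
  rw [this]
  exact .iUnion fun v => (hf (measurableSet_singleton v)).inter (hg trivial)

/-- Fubini for products over Fin m → ℕ in ℝ≥0∞ -/
lemma tsum_pi_prod : ∀ (m : ℕ) (g : ℕ → ℕ → ENNReal),
    ∑' δ : Fin m → ℕ, ∏ k : Fin m, g k (δ k) = ∏ k : Fin m, ∑' c, g k c := by
  intro m
  induction m with
  | zero =>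
    intro g
    simp only [Finset.univ_eq_empty, Finset.prod_empty]
    exact tsum_eq_single (fun i => i.elim0) fun b hb => absurd (funext fun i => i.elim0) hb
  | succ m ih =>
    intro g
    rw [← (Fin.consEquiv (fun _ : Fin (m+1) => ℕ)).tsum_eq]
    have h1 : ∀ p : ℕ × (Fin m → ℕ),
        (∏ k : Fin (m+1), g k ((Fin.consEquiv (fun _ : Fin (m+1) => ℕ)) p k))
          = g 0 p.1 * ∏ k : Fin m, g (k + 1) (p.2 k) := by
      intro p
      rw [Fin.prod_univ_succ]
      simp [Fin.consEquiv, Fin.cons_zero, Fin.cons_succ]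
    calc ∑' p : ℕ × (Fin m → ℕ), ∏ k : Fin (m+1), g k ((Fin.consEquiv (fun _ : Fin (m+1) => ℕ)) p k)
        = ∑' (a : ℕ) (b : Fin m → ℕ), g 0 a * ∏ k : Fin m, g (k + 1) (b k) := by
          rw [← ENNReal.tsum_prod]; exact tsum_congr fun p => h1 p
      _ = ∑' a : ℕ, g 0 a * ∑' b : Fin m → ℕ, ∏ k : Fin m, g (k + 1) (b k) :=
          tsum_congr fun a => ENNReal.tsum_mul_left
      _ = (∑' a : ℕ, g 0 a) * ∑' b : Fin m → ℕ, ∏ k : Fin m, g (k + 1) (b k) :=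
          ENNReal.tsum_mul_right
      _ = ∏ k : Fin (m+1), ∑' c, g k c := by
          rw [ih (fun k c => g (k + 1) c), Fin.prod_univ_succ]
          simp


lemma iIndepFun_const {Ω : Type*} [MeasureSpace Ω] [IsProbabilityMeasure (ℙ : Measure Ω)]
    (c : ℕ → ℕ) :
    iIndepFun (fun j : ℕ => fun _ : Ω => c j) ℙ := by
  classical
  rw [iIndepFun_iff_measure_inter_preimage_eq_mul]
  intro S sets hsets
  by_cases h : ∀ i ∈ S, c i ∈ sets i
  · have h1 : ∀ i ∈ S, (fun _ : Ω => c i) ⁻¹' sets i = Set.univ := fun i hi =>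
      Set.preimage_const_of_mem (h i hi)
    have hint : ⋂ i ∈ S, (fun _ : Ω => c i) ⁻¹' sets i = Set.univ := by
      ext ω; simp only [Set.mem_iInter, Set.mem_univ, iff_true]
      intro i hi; rw [h1 i hi]; trivial
    rw [hint]
    have h2 : ∀ i ∈ S, ℙ ((fun _ : Ω => c i) ⁻¹' sets i) = 1 := fun i hi => by
      rw [h1 i hi]; exact measure_univ
    rw [Finset.prod_congr rfl h2]
    simp
  · push_neg at h
    obtain ⟨i0, hi0, hni0⟩ := h
    have h1 : (fun _ : Ω => c i0) ⁻¹' sets i0 = ∅ := Set.preimage_const_of_notMem hni0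
    have hsub : ⋂ i ∈ S, (fun _ : Ω => c i) ⁻¹' sets i ⊆ ∅ := by
      intro ω hω
      rw [← h1]
      exact Set.mem_iInter₂.mp hω i0 hi0
    rw [Set.subset_empty_iff.mp hsub, Finset.prod_eq_zero hi0 (by rw [h1]; exact measure_empty)]
    exact measure_empty

lemma meas_add_eq {Ω : Type*} [MeasureSpace Ω] (X Y X' Y' : Ω → ℕ)
    (hX : Measurable X) (hY : Measurable Y) (hX' : Measurable X') (hY' : Measurable Y')
    (hXY : IndepFun X Y ℙ) (hXY' : IndepFun X' Y' ℙ)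
    (hXid : ∀ b, ℙ (X ⁻¹' {b}) = ℙ (X' ⁻¹' {b})) (hYid : ∀ b, ℙ (Y ⁻¹' {b}) = ℙ (Y' ⁻¹' {b}))
    (a : ℕ) : ℙ ((fun ω => X ω + Y ω) ⁻¹' {a}) = ℙ ((fun ω => X' ω + Y' ω) ⁻¹' {a}) := by
  have key : ∀ (U V : Ω → ℕ), Measurable U → Measurable V → IndepFun U V ℙ →
      ℙ ((fun ω => U ω + V ω) ⁻¹' {a})
        = ∑ b ∈ Finset.range (a+1), ℙ (U ⁻¹' {b}) * ℙ (V ⁻¹' {a - b}) := by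
    intro U V hU hV hUV
    have hset : (fun ω => U ω + V ω) ⁻¹' {a}
        = ⋃ b ∈ (Finset.range (a+1) : Finset ℕ), (U ⁻¹' {b} ∩ V ⁻¹' {a - b}) := by
      ext ω
      simp only [Set.mem_preimage, Set.mem_singleton_iff, Set.mem_iUnion, Finset.mem_range,
        Nat.lt_succ_iff, Set.mem_inter_iff, exists_prop]
      constructor
      · intro h; exact ⟨U ω, by omega, rfl, by omega⟩
      · rintro ⟨b, hb, h1, h2⟩; omega
    rw [hset, measure_biUnion_finset]
    · exact Finset.sum_congr rfl fun b _ =>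
        hUV.measure_inter_preimage_eq_mul _ _ (measurableSet_singleton _) (measurableSet_singleton _)
    · intro b _ b' _ hbb'
      refine Set.disjoint_left.mpr fun ω h1 h2 => hbb' ?_
      have e1 : U ω = b := h1.1
      have e2 : U ω = b' := h2.1
      omega
    · intro b _
      exact (hU (measurableSet_singleton _)).inter (hV (measurableSet_singleton _))
  rw [key X Y hX hY hXY, key X' Y' hX' hY' hXY']
  exact Finset.sum_congr rfl fun b _ => by rw [hXid, hYid]





section Step
variable {Ω : Type*} [MeasureSpace Ω] [IsProbabilityMeasure (ℙ : Measure Ω)]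

lemma step (ξ : ℕ → ℕ → Ω → ℕ) (hmeas : ∀ n i, Measurable (ξ n i))
    (hindep : iIndepFun (fun p : ℕ × ℕ => ξ p.1 p.2) ℙ)
    (hident : ∀ n i, IdentDistrib (ξ n i) (ξ 0 0) ℙ ℙ)
    (n : ℕ) (S : ℕ → Ω → ℕ)
    (hS0 : ∀ ω, S 0 ω = 0)
    (hSmeasG : ∀ j, Measurable[⨆ p ∈ {p : ℕ × ℕ | p.1 ≤ n},
      MeasurableSpace.comap (fun ω => ξ p.1 p.2 ω) inferInstance] (S j))
    (hSmono : ∀ j ω, S j ω ≤ S (j+1) ω)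
    (ihInd : iIndepFun (fun j : ℕ => fun ω => S (j+1) ω - S j ω) ℙ)
    (ihId : ∀ j, IdentDistrib (fun ω => S (j+1) ω - S j ω) (fun ω => S 1 ω) ℙ ℙ)
    (T : ℕ → Ω → ℕ)
    (hT : ∀ j ω, T j ω = ∑ i ∈ Finset.Ico (S j ω) (S (j+1) ω), ξ (n+1) i ω) :
    iIndepFun T ℙ ∧ ∀ j, IdentDistrib (T j) (T 0) ℙ ℙ := by
  classical
  -- ambient measurability
  have hGle : ∀ (Sp : Set (ℕ × ℕ)),
      (⨆ p ∈ Sp, MeasurableSpace.comap (fun ω => ξ p.1 p.2 ω) inferInstance)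
        ≤ (inferInstance : MeasurableSpace Ω) :=
    fun Sp => iSup₂_le fun p _ => (hmeas p.1 p.2).comap_le
  have hSmeas : ∀ j, Measurable (S j) := fun j => (hSmeasG j).mono (hGle _) le_rfl
  have hDmeas : ∀ k, Measurable (fun ω => S (k+1) ω - S k ω) :=
    fun k => measurable_nat_sub (hSmeas (k+1)) (hSmeas k)
  have hsummeas : ∀ t : Finset ℕ, Measurable (fun ω => ∑ i ∈ t, ξ (n+1) i ω) :=
    fun t => Finset.measurable_sum t fun i _ => hmeas (n+1) i
  have hTmeas : ∀ j, Measurable (T j) := by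
    intro j
    have : T j = fun ω => (fun u v ω' => ∑ i ∈ Finset.Ico u v, ξ (n+1) i ω') (S j ω) (S (j+1) ω) ω := by
      funext ω; exact hT j ω
    rw [this]
    exact measurable_nat_elim (hSmeas j)
      (fun u => measurable_nat_elim (hSmeas (j+1)) (fun v => hsummeas (Finset.Ico u v)))
  -- basic distributions
  obtain ⟨ρ, hρdef⟩ : ∃ ρ : ℕ → ENNReal, ∀ c, ρ c = ℙ ((fun ω => S 1 ω) ⁻¹' {c}) :=
    ⟨_, fun _ => rfl⟩
  have hρ : ∀ k c, ℙ ((fun ω => S (k+1) ω - S k ω) ⁻¹' {c}) = ρ c := fun k c => by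
    rw [hρdef]; exact (ihId k).measure_mem_eq (measurableSet_singleton c)
  have hρsum : ∑' c, ρ c = 1 := by
    have hcov : (Set.univ : Set Ω) = ⋃ c : ℕ, (fun ω => S 1 ω) ⁻¹' {c} := by
      ext ω; simp
    have := measure_iUnion (μ := (ℙ : Measure Ω))
      (f := fun c : ℕ => (fun ω => S 1 ω) ⁻¹' {c})
      (fun c c' hcc' => Set.disjoint_left.mpr fun ω h1 h2 => hcc' (by
        simp only [Set.mem_preimage, Set.mem_singleton_iff] at h1 h2; omega))
      (fun c => hSmeas 1 (measurableSet_singleton c))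
    rw [← hcov] at this
    rw [tsum_congr (fun c => hρdef c), ← this, measure_univ]
  obtain ⟨β, hβdef⟩ : ∃ β : ℕ → ℕ → ENNReal,
      ∀ c a, β c a = ℙ ((fun ω => ∑ i ∈ Finset.range c, ξ (n+1) i ω) ⁻¹' {a}) :=
    ⟨_, fun _ _ => rfl⟩
  -- shift invariance
  have hshift : ∀ c s a, ℙ ((fun ω => ∑ i ∈ Finset.Ico s (s+c), ξ (n+1) i ω) ⁻¹' {a}) = β c a := by
    intro c
    induction c with
    | zero => intro s a; rw [hβdef]; simp
    | succ c ihc =>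
      intro s a
      have h1 : (fun ω => ∑ i ∈ Finset.Ico s (s+(c+1)), ξ (n+1) i ω)
          = fun ω => (∑ i ∈ Finset.Ico s (s+c), ξ (n+1) i ω) + ξ (n+1) (s+c) ω := by
        funext ω
        have : s + (c+1) = (s+c) + 1 := by omega
        rw [this, Finset.sum_Ico_succ_top (by omega)]
      have h2 : (fun ω => ∑ i ∈ Finset.range (c+1), ξ (n+1) i ω)
          = fun ω => (∑ i ∈ Finset.range c, ξ (n+1) i ω) + ξ (n+1) c ω := by
        funext ω; rw [Finset.sum_range_succ]
      rw [h1, hβdef, h2]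
      have hIF : ∀ (s' : ℕ),
          IndepFun (fun ω => ∑ i ∈ Finset.Ico s' (s'+c), ξ (n+1) i ω) (ξ (n+1) (s'+c)) ℙ := by
        intro s'
        have hemb : Function.Injective (fun i : ℕ => ((n+1 : ℕ), i)) := fun a b h =>
          congrArg Prod.snd h
        have hni : ((n+1 : ℕ), s'+c) ∉ (Finset.Ico s' (s'+c)).map ⟨_, hemb⟩ := by
          simp only [Finset.mem_map, Function.Embedding.coeFn_mk, Finset.mem_Ico, Prod.mk.injEq]
          rintro ⟨i, ⟨_, hi2⟩, _, rfl⟩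
          omega
        have := hindep.indepFun_finsetSum_of_notMem (fun p => hmeas p.1 p.2) hni
        have hsum_eq : (∑ p ∈ (Finset.Ico s' (s'+c)).map ⟨_, hemb⟩, (fun q : ℕ × ℕ => ξ q.1 q.2) p)
            = fun ω => ∑ i ∈ Finset.Ico s' (s'+c), ξ (n+1) i ω := by
          funext ω
          rw [Finset.sum_apply, Finset.sum_map]
          rfl
        rwa [hsum_eq] at this
      have hYid : ∀ b, ℙ (ξ (n+1) (s+c) ⁻¹' {b}) = ℙ (ξ (n+1) c ⁻¹' {b}) := fun b =>
        ((hident (n+1) (s+c)).trans (hident (n+1) c).symm).measure_mem_eq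
          (measurableSet_singleton b)
      have hXid : ∀ b, ℙ ((fun ω => ∑ i ∈ Finset.Ico s (s+c), ξ (n+1) i ω) ⁻¹' {b})
          = ℙ ((fun ω => ∑ i ∈ Finset.range c, ξ (n+1) i ω) ⁻¹' {b}) := fun b => by
        rw [ihc s b, hβdef]
      have hIF' : IndepFun (fun ω => ∑ i ∈ Finset.range c, ξ (n+1) i ω) (ξ (n+1) c) ℙ := by
        have h0 := hIF 0
        rw [zero_add] at h0
        rw [← Finset.range_eq_Ico] at h0
        exact h0
      exact meas_add_eq _ _ _ _ (hsummeas _) (hmeas _ _) (hsummeas _) (hmeas _ _)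
        (hIF s) hIF' hXid hYid a
  -- independence of sums over disjoint deterministic blocks of row n+1
  have hrowmeas : ∀ (Sp : Set (ℕ × ℕ)) (t : Finset ℕ), (∀ i ∈ t, ((n+1 : ℕ), i) ∈ Sp) →
      Measurable[⨆ p ∈ Sp, MeasurableSpace.comap (fun ω => ξ p.1 p.2 ω) inferInstance]
        (fun ω => ∑ i ∈ t, ξ (n+1) i ω) := by
    intro Sp t ht
    exact Finset.measurable_sum t fun i hi =>
      measurable_iff_comap_le.mpr
        (le_biSup (fun p : ℕ × ℕ => MeasurableSpace.comap (fun ω => ξ p.1 p.2 ω) inferInstance)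
          (ht i hi))
  have hblocks : ∀ (F : Finset ℕ) (u v : ℕ → ℕ),
      (∀ j ∈ F, ∀ j' ∈ F, j ≠ j' →
        Disjoint (Finset.Ico (u j) (v j)) (Finset.Ico (u j') (v j'))) →
      ∀ a : ℕ → ℕ,
      ℙ (⋂ j ∈ F, (fun ω => ∑ i ∈ Finset.Ico (u j) (v j), ξ (n+1) i ω) ⁻¹' {a j})
        = ∏ j ∈ F, ℙ ((fun ω => ∑ i ∈ Finset.Ico (u j) (v j), ξ (n+1) i ω) ⁻¹' {a j}) := by
    intro F
    induction F using Finset.induction_on with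
    | empty => intro u v _ a; simp
    | @insert j0 F hj0 ihF =>
      intro u v hdisj a
      have hdisjF : ∀ j ∈ F, ∀ j' ∈ F, j ≠ j' →
          Disjoint (Finset.Ico (u j) (v j)) (Finset.Ico (u j') (v j')) := fun j hj j' hj' h =>
        hdisj j (Finset.mem_insert_of_mem hj) j' (Finset.mem_insert_of_mem hj') h
      have hSl : Disjoint {p : ℕ × ℕ | p.1 = n+1 ∧ p.2 ∈ Finset.Ico (u j0) (v j0)}
          {p : ℕ × ℕ | p.1 = n+1 ∧ ∃ j' ∈ F, p.2 ∈ Finset.Ico (u j') (v j')} := by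
        refine Set.disjoint_left.mpr ?_
        rintro p ⟨_, hp2⟩ ⟨_, j, hjF, hp2'⟩
        have hne : j0 ≠ j := fun h => hj0 (h ▸ hjF)
        exact Finset.disjoint_left.mp
          (hdisj j0 (Finset.mem_insert_self _ _) j (Finset.mem_insert_of_mem hjF) hne) hp2 hp2'
      have hIndep := indep_iSup_of_disjoint
        (m := fun p : ℕ × ℕ => MeasurableSpace.comap (fun ω => ξ p.1 p.2 ω) inferInstance)
        (fun p => (hmeas p.1 p.2).comap_le) hindep.iIndep hSl
      have hA : MeasurableSet[⨆ p ∈ {p : ℕ × ℕ | p.1 = n+1 ∧ p.2 ∈ Finset.Ico (u j0) (v j0)},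
          MeasurableSpace.comap (fun ω => ξ p.1 p.2 ω) inferInstance]
          ((fun ω => ∑ i ∈ Finset.Ico (u j0) (v j0), ξ (n+1) i ω) ⁻¹' {a j0}) :=
        hrowmeas {p : ℕ × ℕ | p.1 = n+1 ∧ p.2 ∈ Finset.Ico (u j0) (v j0)} _
          (fun i hi => show _ ∧ _ from ⟨rfl, hi⟩) (measurableSet_singleton _)
      have hB : MeasurableSet[⨆ p ∈ {p : ℕ × ℕ | p.1 = n+1 ∧ ∃ j' ∈ F, p.2 ∈ Finset.Ico (u j') (v j')},
          MeasurableSpace.comap (fun ω => ξ p.1 p.2 ω) inferInstance]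
          (⋂ j ∈ F, (fun ω => ∑ i ∈ Finset.Ico (u j) (v j), ξ (n+1) i ω) ⁻¹' {a j}) := by
        refine MeasurableSet.biInter F.countable_toSet fun j hj => ?_
        exact hrowmeas {p : ℕ × ℕ | p.1 = n+1 ∧ ∃ j' ∈ F, p.2 ∈ Finset.Ico (u j') (v j')} _
          (fun i hi => show _ ∧ _ from ⟨rfl, ⟨j, hj, hi⟩⟩) (measurableSet_singleton _)
      rw [Finset.set_biInter_insert, Finset.prod_insert hj0,
        (Indep_iff _ _ _).mp hIndep _ _ hA hB, ihF u v hdisjF a]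
  have hGH : Indep
      (⨆ p ∈ {p : ℕ × ℕ | p.1 ≤ n}, MeasurableSpace.comap (fun ω => ξ p.1 p.2 ω) inferInstance)
      (⨆ p ∈ {p : ℕ × ℕ | p.1 = n+1}, MeasurableSpace.comap (fun ω => ξ p.1 p.2 ω) inferInstance)
      ℙ := by
    refine indep_iSup_of_disjoint
      (m := fun p : ℕ × ℕ => MeasurableSpace.comap (fun ω => ξ p.1 p.2 ω) inferInstance)
      (fun p => (hmeas p.1 p.2).comap_le) hindep.iIndep ?_
    refine Set.disjoint_left.mpr ?_
    intro p hp hp'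
    simp only [Set.mem_setOf_eq] at hp hp'
    omega
  have hmaster : ∀ (F : Finset ℕ) (m : ℕ), (∀ j ∈ F, j < m) → ∀ a : ℕ → ℕ,
      ℙ (⋂ j ∈ F, T j ⁻¹' {a j}) = ∏ j ∈ F, ∑' c, ρ c * β c (a j) := by
    intro F m hFm a
    obtain ⟨dd, hdd⟩ : ∃ dd : (Fin m → ℕ) → ℕ → ℕ,
        ∀ δ k, dd δ k = if h : k < m then δ ⟨k, h⟩ else 0 := ⟨_, fun _ _ => rfl⟩
    obtain ⟨sd, hsd⟩ : ∃ sd : (Fin m → ℕ) → ℕ → ℕ,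
        ∀ δ j, sd δ j = ∑ k ∈ Finset.range j, dd δ k := ⟨_, fun _ _ => rfl⟩
    obtain ⟨E, hE⟩ : ∃ E : (Fin m → ℕ) → Set Ω,
        ∀ δ, E δ = ⋂ k ∈ Finset.range m, (fun ω => S (k+1) ω - S k ω) ⁻¹' {dd δ k} :=
      ⟨_, fun _ => rfl⟩
    obtain ⟨B, hB⟩ : ∃ B : (Fin m → ℕ) → Set Ω,
        ∀ δ, B δ = ⋂ j ∈ F,
          (fun ω => ∑ i ∈ Finset.Ico (sd δ j) (sd δ (j+1)), ξ (n+1) i ω) ⁻¹' {a j} :=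
      ⟨_, fun _ => rfl⟩
    have hddval : ∀ δ (k : Fin m), dd δ k = δ k := fun δ k => by
      rw [hdd, dif_pos k.isLt]
    have hsdstep : ∀ δ j, sd δ (j+1) = sd δ j + dd δ j := fun δ j => by
      rw [hsd, hsd, Finset.sum_range_succ]
    have hsdmono : ∀ δ, ∀ t t', t ≤ t' → sd δ t ≤ sd δ t' := fun δ t t' h => by
      rw [hsd, hsd]; exact Finset.sum_le_sum_of_subset (Finset.range_subset_range.mpr h)
    have hEmeas : ∀ δ, MeasurableSet (E δ) := fun δ => by
      rw [hE]
      exact MeasurableSet.biInter (Finset.range m).countable_toSet fun k _ =>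
        hDmeas k (measurableSet_singleton _)
    have hAmeas : MeasurableSet (⋂ j ∈ F, T j ⁻¹' {a j}) :=
      MeasurableSet.biInter F.countable_toSet fun j _ => hTmeas j (measurableSet_singleton _)
    have hkey : ∀ δ ω, ω ∈ E δ → ∀ j, j < m →
        T j ω = ∑ i ∈ Finset.Ico (sd δ j) (sd δ (j+1)), ξ (n+1) i ω := by
      intro δ ω hω j hj
      have hval : ∀ k, k < m → S (k+1) ω - S k ω = dd δ k := by
        intro k hk
        rw [hE] at hω
        exact Set.mem_iInter₂.mp hω k (Finset.mem_range.mpr hk)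
      have hSval : ∀ t, t ≤ m → S t ω = sd δ t := by
        intro t
        induction t with
        | zero => intro _; rw [hS0, hsd]; simp
        | succ t iht =>
          intro ht
          have h2 : S (t+1) ω = S t ω + (S (t+1) ω - S t ω) := by
            have := hSmono t ω; omega
          rw [h2, hval t (by omega), iht (by omega), hsdstep]
      rw [hT j ω, hSval j (by omega), hSval (j+1) (by omega)]
    have hcover : (⋂ j ∈ F, T j ⁻¹' {a j})
        = ⋃ δ : Fin m → ℕ, ((⋂ j ∈ F, T j ⁻¹' {a j}) ∩ E δ) := by
      ext ω
      simp only [Set.mem_iUnion, Set.mem_inter_iff]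
      constructor
      · intro h
        refine ⟨fun k => S ((k : ℕ)+1) ω - S (k : ℕ) ω, h, ?_⟩
        rw [hE]
        refine Set.mem_iInter₂.mpr fun k hk => ?_
        have hdk : dd (fun k : Fin m => S ((k : ℕ)+1) ω - S (k : ℕ) ω) k
            = S (k+1) ω - S k ω := by
          rw [hdd, dif_pos (Finset.mem_range.mp hk)]
        simp only [Set.mem_preimage, Set.mem_singleton_iff]
        rw [hdk]
      · rintro ⟨δ, h, _⟩; exact h
    have hdisjE : Pairwise (Function.onFun Disjoint
        (fun δ : Fin m → ℕ => (⋂ j ∈ F, T j ⁻¹' {a j}) ∩ E δ)) := by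
      intro δ δ' hne
      obtain ⟨k0, hk0⟩ : ∃ k0 : Fin m, δ k0 ≠ δ' k0 := by
        by_contra h; push_neg at h; exact hne (funext h)
      refine Set.disjoint_left.mpr ?_
      rintro ω ⟨_, h1⟩ ⟨_, h2⟩
      rw [hE] at h1 h2
      have e1 := Set.mem_iInter₂.mp h1 (k0 : ℕ) (Finset.mem_range.mpr k0.isLt)
      have e2 := Set.mem_iInter₂.mp h2 (k0 : ℕ) (Finset.mem_range.mpr k0.isLt)
      simp only [Set.mem_preimage, Set.mem_singleton_iff] at e1 e2
      apply hk0
      rw [← hddval δ k0, ← hddval δ' k0, ← e1, ← e2]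
    have hsplit : ℙ (⋂ j ∈ F, T j ⁻¹' {a j})
        = ∑' δ : Fin m → ℕ, ℙ ((⋂ j ∈ F, T j ⁻¹' {a j}) ∩ E δ) := by
      conv_lhs => rw [hcover]
      exact measure_iUnion hdisjE fun δ => hAmeas.inter (hEmeas δ)
    have hinterBE : ∀ δ, (⋂ j ∈ F, T j ⁻¹' {a j}) ∩ E δ = E δ ∩ B δ := by
      intro δ
      ext ω
      simp only [Set.mem_inter_iff]
      constructor
      · rintro ⟨h1, h2⟩
        refine ⟨h2, ?_⟩
        rw [hB]
        refine Set.mem_iInter₂.mpr fun j hj => ?_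
        have h3 := Set.mem_iInter₂.mp h1 j hj
        simp only [Set.mem_preimage, Set.mem_singleton_iff] at h3 ⊢
        rw [← hkey δ ω h2 j (hFm j hj)]
        exact h3
      · rintro ⟨h2, h1⟩
        refine ⟨?_, h2⟩
        rw [hB] at h1
        refine Set.mem_iInter₂.mpr fun j hj => ?_
        have h3 := Set.mem_iInter₂.mp h1 j hj
        simp only [Set.mem_preimage, Set.mem_singleton_iff] at h3 ⊢
        rw [hkey δ ω h2 j (hFm j hj)]
        exact h3
    have hEB : ∀ δ, ℙ (E δ ∩ B δ) = ℙ (E δ) * ℙ (B δ) := by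
      intro δ
      refine (Indep_iff _ _ _).mp hGH _ _ ?_ ?_
      · rw [hE]
        refine MeasurableSet.biInter (Finset.range m).countable_toSet fun k _ => ?_
        exact measurable_nat_sub (hSmeasG (k+1)) (hSmeasG k) (measurableSet_singleton _)
      · rw [hB]
        refine MeasurableSet.biInter F.countable_toSet fun j _ => ?_
        exact hrowmeas {p : ℕ × ℕ | p.1 = n+1} _ (fun i _ => rfl) (measurableSet_singleton _)
    have hEval : ∀ δ, ℙ (E δ) = ∏ k ∈ Finset.range m, ρ (dd δ k) := by
      intro δ
      rw [hE]
      rw [ihInd.meas_biInter (S := Finset.range m)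
        (s := fun k => (fun ω => S (k+1) ω - S k ω) ⁻¹' {dd δ k})
        (fun k _ => (measurable_iff_comap_le.mpr le_rfl) (measurableSet_singleton _))]
      exact Finset.prod_congr rfl fun k _ => hρ k (dd δ k)
    have hBval : ∀ δ, ℙ (B δ) = ∏ j ∈ F, β (dd δ j) (a j) := by
      intro δ
      rw [hB]
      rw [hblocks F (sd δ) (fun j => sd δ (j+1)) ?_ a]
      · refine Finset.prod_congr rfl fun j _ => ?_
        have hIco : Finset.Ico (sd δ j) (sd δ (j+1))
            = Finset.Ico (sd δ j) (sd δ j + dd δ j) := by rw [hsdstep]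
        rw [hIco, hshift (dd δ j) (sd δ j) (a j)]
      · intro j _ j' _ hne
        rcases Nat.lt_or_ge j j' with h | h
        · refine Finset.disjoint_left.mpr fun x hx hx' => ?_
          simp only [Finset.mem_Ico] at hx hx'
          have := hsdmono δ (j+1) j' h
          omega
        · have hlt : j' < j := by omega
          refine Finset.disjoint_left.mpr fun x hx hx' => ?_
          simp only [Finset.mem_Ico] at hx hx'
          have := hsdmono δ (j'+1) j hlt
          omega
    have hFsub : F ⊆ Finset.range m := fun j hj => Finset.mem_range.mpr (hFm j hj)
    calc ℙ (⋂ j ∈ F, T j ⁻¹' {a j})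
        = ∑' δ : Fin m → ℕ, (∏ k ∈ Finset.range m, ρ (dd δ k)) * ∏ j ∈ F, β (dd δ j) (a j) := by
          rw [hsplit]
          exact tsum_congr fun δ => by rw [hinterBE δ, hEB δ, hEval δ, hBval δ]
      _ = ∑' δ : Fin m → ℕ, ∏ k ∈ Finset.range m,
            (ρ (dd δ k) * if k ∈ F then β (dd δ k) (a k) else 1) := by
          refine tsum_congr fun δ => ?_
          rw [Finset.prod_mul_distrib, Finset.prod_ite_mem (Finset.range m) F
            (fun k => β (dd δ k) (a k)), (Finset.inter_eq_right).mpr hFsub]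
      _ = ∑' δ : Fin m → ℕ, ∏ k : Fin m,
            (ρ (δ k) * if (k : ℕ) ∈ F then β (δ k) (a k) else 1) := by
          refine tsum_congr fun δ => ?_
          rw [Finset.prod_range (fun k => ρ (dd δ k) * if k ∈ F then β (dd δ k) (a k) else 1)]
          exact Finset.prod_congr rfl fun k _ => by rw [hddval δ k]
      _ = ∏ k : Fin m, ∑' c, (ρ c * if (k : ℕ) ∈ F then β c (a k) else 1) :=
          tsum_pi_prod m (fun k c => ρ c * if k ∈ F then β c (a k) else 1)
      _ = ∏ k ∈ Finset.range m, ∑' c, (ρ c * if k ∈ F then β c (a k) else 1) :=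
          (Finset.prod_range fun k => ∑' c, (ρ c * if k ∈ F then β c (a k) else 1)).symm
      _ = ∏ k ∈ Finset.range m, (if k ∈ F then ∑' c, ρ c * β c (a k) else 1) := by
          refine Finset.prod_congr rfl fun k _ => ?_
          by_cases hk : k ∈ F
          · simp only [hk, if_true]
          · simp only [hk, if_false, mul_one, hρsum]
      _ = ∏ j ∈ F, ∑' c, ρ c * β c (a j) := by
          rw [Finset.prod_ite_mem (Finset.range m) F (fun k => ∑' c, ρ c * β c (a k)),
            (Finset.inter_eq_right).mpr hFsub]
  have hsingle : ∀ j aa, ℙ (T j ⁻¹' {aa}) = ∑' c, ρ c * β c aa := by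
    intro j aa
    have := hmaster {j} (j+1) (by intro x hx; simp at hx; omega) (fun _ => aa)
    simpa using this
  constructor
  · rw [iIndepFun_iff_iIndep]
    refine iIndepSets.iIndep (fun j => (hTmeas j).comap_le)
      (fun j => {s | ∃ aa : ℕ, T j ⁻¹' {aa} = s}) ?_ ?_ ?_
    · intro j s hs t ht hst
      obtain ⟨aa, rfl⟩ := hs
      obtain ⟨bb, rfl⟩ := ht
      obtain ⟨ω, hω1, hω2⟩ := hst
      simp only [Set.mem_preimage, Set.mem_singleton_iff] at hω1 hω2
      have : aa = bb := by omega
      subst this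
      exact ⟨aa, by rw [Set.inter_self]⟩
    · intro j
      conv_lhs => rw [show (Nat.instMeasurableSpace : MeasurableSpace ℕ)
        = MeasurableSpace.generateFrom (Set.range (fun a : ℕ => ({a} : Set ℕ))) from
          nat_generateFrom_singletons]
      rw [MeasurableSpace.comap_generateFrom]
      congr 1
      ext s
      constructor
      · rintro ⟨u, ⟨aa, rfl⟩, rfl⟩; exact ⟨aa, rfl⟩
      · rintro ⟨aa, rfl⟩; exact ⟨{aa}, ⟨aa, rfl⟩, rfl⟩
    · rw [iIndepSets_iff]
      intro Sf sets hsets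
      have ha : ∀ j, j ∈ Sf → ∃ aa, T j ⁻¹' {aa} = sets j := hsets
      choose! aa haa using ha
      calc ℙ (⋂ j ∈ Sf, sets j) = ℙ (⋂ j ∈ Sf, T j ⁻¹' {aa j}) := by
            congr 1; exact Set.iInter₂_congr fun j hj => (haa j hj).symm
        _ = ∏ j ∈ Sf, ∑' c, ρ c * β c (aa j) :=
            hmaster Sf (Sf.sup id + 1)
              (fun j hj => Nat.lt_succ_of_le (Finset.le_sup (f := id) hj)) aa
        _ = ∏ j ∈ Sf, ℙ (sets j) := Finset.prod_congr rfl fun j hj => by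
            rw [← haa j hj, hsingle]
  · intro j
    refine ⟨(hTmeas j).aemeasurable, (hTmeas 0).aemeasurable, Measure.ext_of_singleton fun aa => ?_⟩
    rw [Measure.map_apply (hTmeas j) (measurableSet_singleton aa),
      Measure.map_apply (hTmeas 0) (measurableSet_singleton aa), hsingle, hsingle]


end Step

end Stmt6Aux

open MeasureTheory ProbabilityTheory

/-- Let `R⁽ⁿ⁾` be i.i.d. increasing random walks on `ℕ` (steps `ξ (n, i) ≥ 1` i.i.d.,
`ℙ(ξ = 1) < 1`, mean `μ ∈ (1,∞)`).  Then for each `n` the composition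
`C n = R⁽ⁿ⁾ ∘ ⋯ ∘ R⁽¹⁾` has i.i.d. increments `j ↦ C n (j+1) - C n j`, each distributed
as `C n 1`, the generation-`n` size of the Galton–Watson process with offspring law `ξ`
and one ancestor. -/
theorem stmt6 {Ω : Type*} [MeasureSpace Ω] [IsProbabilityMeasure (ℙ : Measure Ω)]
    (ξ : ℕ → ℕ → Ω → ℕ) (hmeas : ∀ n i, Measurable (ξ n i))
    (hpos : ∀ n i ω, 1 ≤ ξ n i ω)
    (hindep : iIndepFun (fun p : ℕ × ℕ => ξ p.1 p.2) ℙ)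
    (hident : ∀ n i, IdentDistrib (ξ n i) (ξ 0 0) ℙ ℙ)
    (hp1 : ℙ {ω | ξ 0 0 ω = 1} < 1)
    (μ : ℝ) (hμ : μ = ∫ ω, (ξ 0 0 ω : ℝ))
    (hμfin : Integrable (fun ω => (ξ 0 0 ω : ℝ))) (hμgt : 1 < μ)
    (R : ℕ → ℕ → Ω → ℕ) (hR : ∀ n k ω, R n k ω = ∑ i ∈ Finset.range k, ξ n i ω)
    (C : ℕ → ℕ → Ω → ℕ) (hC0 : ∀ j ω, C 0 j ω = j)
    (hCrec : ∀ n j ω, C (n + 1) j ω = R (n + 1) (C n j ω) ω) :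
    ∀ n : ℕ,
      iIndepFun
        (fun j : ℕ => fun ω => C n (j + 1) ω - C n j ω) ℙ ∧
      ∀ j : ℕ, IdentDistrib (fun ω => C n (j + 1) ω - C n j ω) (fun ω => C n 1 ω) ℙ ℙ := by
  classical
  have hCzero : ∀ N ω, C N 0 ω = 0 := by
    intro N
    induction N with
    | zero => intro ω; rw [hC0]
    | succ N ihN => intro ω; rw [hCrec, ihN, hR]; simp
  have hmono : ∀ N j ω, C N j ω ≤ C N (j+1) ω := by
    intro N
    induction N with
    | zero => intro j ω; rw [hC0, hC0]; omega
    | succ N ihN =>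
      intro j ω
      rw [hCrec, hCrec, hR, hR]
      exact Finset.sum_le_sum_of_subset (Finset.range_subset_range.mpr (ihN j ω))
  have hCG : ∀ N j, Measurable[⨆ p ∈ {p : ℕ × ℕ | p.1 ≤ N},
      MeasurableSpace.comap (fun ω => ξ p.1 p.2 ω) inferInstance] (C N j) := by
    intro N
    induction N with
    | zero =>
      intro j
      have : C 0 j = fun _ => j := funext fun ω => hC0 j ω
      rw [this]
      exact measurable_const
    | succ N ihN =>
      intro j
      have hrw : C (N+1) j
          = fun ω => (fun k ω' => ∑ i ∈ Finset.range k, ξ (N+1) i ω') (C N j ω) ω := by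
        funext ω; simp only; rw [hCrec, hR]
      rw [hrw]
      refine Stmt6Aux.measurable_nat_elim (g := C N j)
        (F := fun k ω' => ∑ i ∈ Finset.range k, ξ (N+1) i ω') ?_ ?_
      · refine (ihN j).mono ?_ le_rfl
        refine biSup_mono fun p hp => ?_
        simp only [Set.mem_setOf_eq] at hp ⊢
        omega
      · intro k
        refine Finset.measurable_sum _ fun i _ =>
          measurable_iff_comap_le.mpr
            (le_biSup (fun p : ℕ × ℕ =>
              MeasurableSpace.comap (fun ω => ξ p.1 p.2 ω) inferInstance)
              (show ((N+1 : ℕ), i) ∈ {p : ℕ × ℕ | p.1 ≤ N+1} from Set.mem_setOf_eq ▸ le_rfl))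
  have hCmeas : ∀ N j, Measurable (C N j) := fun N j =>
    (hCG N j).mono (iSup₂_le fun p _ => (hmeas p.1 p.2).comap_le) le_rfl
  intro n
  induction n with
  | zero =>
    constructor
    · have hrw : (fun j : ℕ => fun ω => C 0 (j+1) ω - C 0 j ω)
          = fun j : ℕ => fun _ : Ω => (fun _ : ℕ => 1) j := by
        funext j ω; simp only [hC0]; omega
      rw [hrw]
      exact Stmt6Aux.iIndepFun_const (fun _ => 1)
    · intro j
      have h1 : (fun ω => C 0 (j+1) ω - C 0 j ω) = (fun ω => C 0 1 ω) := by
        funext ω; rw [hC0, hC0, hC0]; omega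
      rw [h1]
      exact IdentDistrib.refl (hCmeas 0 1).aemeasurable
  | succ n ihn =>
    obtain ⟨ihInd, ihId⟩ := ihn
    have hT : ∀ j ω, C (n+1) (j+1) ω - C (n+1) j ω
        = ∑ i ∈ Finset.Ico (C n j ω) (C n (j+1) ω), ξ (n+1) i ω := by
      intro j ω
      have h1 : C (n+1) j ω = ∑ i ∈ Finset.range (C n j ω), ξ (n+1) i ω := by rw [hCrec, hR]
      have h2 : C (n+1) (j+1) ω = ∑ i ∈ Finset.range (C n (j+1) ω), ξ (n+1) i ω := by
        rw [hCrec, hR]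
      have h3 : (∑ i ∈ Finset.range (C n j ω), ξ (n+1) i ω)
          + ∑ i ∈ Finset.Ico (C n j ω) (C n (j+1) ω), ξ (n+1) i ω
          = ∑ i ∈ Finset.range (C n (j+1) ω), ξ (n+1) i ω := by
        rw [Finset.range_eq_Ico, Finset.range_eq_Ico]
        exact Finset.sum_Ico_consecutive _ (Nat.zero_le _) (hmono n j ω)
      omega
    have hstep := Stmt6Aux.step ξ hmeas hindep hident n (C n) (hCzero n) (hCG n) (hmono n)
      ihInd ihId (fun j ω => C (n+1) (j+1) ω - C (n+1) j ω) hT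
    refine ⟨hstep.1, fun j => (hstep.2 j).trans ?_⟩
    have h0 : (fun ω => C (n+1) (0+1) ω - C (n+1) 0 ω) = fun ω => C (n+1) 1 ω := by
      funext ω; rw [hCzero]; simp
    rw [show (0 : ℕ) + 1 = 1 from rfl] at h0
    rw [← h0]
    exact IdentDistrib.refl ((Stmt6Aux.measurable_nat_sub (hCmeas (n+1) 1)
      (hCmeas (n+1) 0))).aemeasurable
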